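/- Let n ≥ 5 be an integer, Ω ⊂ ℝⁿ a bounded open set, y₀ ∈ Ω, and H : closure(Ω) → ℝ a continuous function. Suppose that for each λ > 0 a measurable function θ_λ : Ω → ℝ satisfies θ_λ(x) = c_n^{(n-2)/4} λ^{-(n-2)/2} H(x) + R_λ(x) with sup_{x∈Ω} |R_λ(x)| ≤ M λ^{-(n+2)/2} for a constant M independent of λ and x. Then, as λ → +∞, ∫_Ω δ_{y₀,λ}(x) θ_λ(x) dx = c_n^{(n-2)/2} λ^{-(n-2)} ∫_Ω H(x) |x−y₀|^{-(n-2)} dx + o(λ^{-(n-2)}). -/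

import Mathlib

open MeasureTheory Filter Asymptotics

section stmt4aux

open Metric Real Set


lemma stmt4_aux_int (n : ℕ) {s : ℝ} (hs : 0 < s) (hsn : s < n)
    (y₀ : EuclideanSpace ℝ (Fin n)) (R : ℝ) :
    IntegrableOn (fun x : EuclideanSpace ℝ (Fin n) => ‖x - y₀‖ ^ (-s)) (Metric.ball y₀ R) := by
  set μ := volume.restrict (Metric.ball y₀ R) with hμ
  have hmeas : Measurable fun x : EuclideanSpace ℝ (Fin n) => ‖x - y₀‖ ^ (-s) := by fun_prop
  refine ⟨hmeas.aestronglyMeasurable, ?_⟩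
  rw [hasFiniteIntegral_iff_ofReal (ae_of_all _ fun x => rpow_nonneg (norm_nonneg _) _)]
  rw [lintegral_eq_lintegral_meas_le μ
    (ae_of_all _ fun x => rpow_nonneg (norm_nonneg _) _) hmeas.aemeasurable]
  -- bound the measure of the superlevel sets
  have hball : ∀ t : ℝ, 0 < t →
      μ {x | t ≤ ‖x - y₀‖ ^ (-s)} ≤ volume (Metric.closedBall y₀ (t ^ (-s)⁻¹)) := by
    intro t ht
    refine le_trans (measure_mono ?_) (Measure.restrict_le_self _)
    intro x hx
    simp only [mem_setOf_eq] at hx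
    simp only [Metric.mem_closedBall, dist_eq_norm]
    rcases eq_or_lt_of_le (norm_nonneg (x - y₀)) with h0 | h0
    · rw [← h0]; positivity
    · exact (Real.le_rpow_inv_iff_of_neg h0 ht (neg_lt_zero.mpr hs)).mpr hx
  have hres : ∀ t : ℝ, μ {x | t ≤ ‖x - y₀‖ ^ (-s)} ≤ volume (Metric.ball y₀ R) := by
    intro t
    calc μ {x | t ≤ ‖x - y₀‖ ^ (-s)} ≤ μ univ := measure_mono (subset_univ _)
      _ = volume (Metric.ball y₀ R) := by rw [hμ, Measure.restrict_apply_univ]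
  calc
    ∫⁻ t in Ioi (0:ℝ), μ {x | t ≤ ‖x - y₀‖ ^ (-s)}
        ≤ ∫⁻ t in Ioc (0:ℝ) 1 ∪ Ioi 1, μ {x | t ≤ ‖x - y₀‖ ^ (-s)} :=
      lintegral_mono_set Ioi_subset_Ioc_union_Ioi
    _ ≤ (∫⁻ t in Ioc (0:ℝ) 1, μ {x | t ≤ ‖x - y₀‖ ^ (-s)}) +
        ∫⁻ t in Ioi (1:ℝ), μ {x | t ≤ ‖x - y₀‖ ^ (-s)} := lintegral_union_le _ _ _
    _ < ⊤ := by
      refine ENNReal.add_lt_top.2 ⟨?_, ?_⟩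
      · calc (∫⁻ t in Ioc (0:ℝ) 1, μ {x | t ≤ ‖x - y₀‖ ^ (-s)})
            ≤ ∫⁻ _t in Ioc (0:ℝ) 1, volume (Metric.ball y₀ R) :=
          lintegral_mono fun t => hres t
          _ = volume (Metric.ball y₀ R) * volume (Ioc (0:ℝ) 1) := by
            rw [setLIntegral_const]
          _ < ⊤ := by
            refine ENNReal.mul_lt_top measure_ball_lt_top ?_
            simp [Real.volume_Ioc]
      · have hkey : ∀ t ∈ Ioi (1:ℝ), μ {x | t ≤ ‖x - y₀‖ ^ (-s)} ≤
            ENNReal.ofReal (t ^ (-(s⁻¹ * n))) * volume (Metric.ball (0 : EuclideanSpace ℝ (Fin n)) 1) := by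
          intro t ht
          have ht0 : (0:ℝ) < t := lt_trans one_pos ht
          refine le_trans (hball t ht0) ?_
          rw [Measure.addHaar_closedBall volume y₀ (by positivity : (0:ℝ) ≤ t ^ (-s)⁻¹)]
          have : (t ^ (-s)⁻¹) ^ (Module.finrank ℝ (EuclideanSpace ℝ (Fin n)))
              = t ^ (-(s⁻¹ * n)) := by
            rw [finrank_euclideanSpace_fin, ← Real.rpow_natCast (t ^ (-s)⁻¹) n,
              ← Real.rpow_mul ht0.le]
            congr 1
            rw [inv_neg]; ring
          rw [this]
        calc (∫⁻ t in Ioi (1:ℝ), μ {x | t ≤ ‖x - y₀‖ ^ (-s)})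
            ≤ ∫⁻ t in Ioi (1:ℝ), ENNReal.ofReal (t ^ (-(s⁻¹ * n))) *
                volume (Metric.ball (0 : EuclideanSpace ℝ (Fin n)) 1) :=
          setLIntegral_mono' measurableSet_Ioi hkey
          _ = (∫⁻ t in Ioi (1:ℝ), ENNReal.ofReal (t ^ (-(s⁻¹ * n)))) *
                volume (Metric.ball (0 : EuclideanSpace ℝ (Fin n)) 1) :=
            lintegral_mul_const' _ _ measure_ball_lt_top.ne
          _ < ⊤ := by
            refine ENNReal.mul_lt_top ?_ measure_ball_lt_top
            refine IntegrableOn.setLIntegral_lt_top ?_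
            refine integrableOn_Ioi_rpow_of_lt ?_ one_pos
            rw [neg_lt_neg_iff]
            rw [show (1:ℝ) = s⁻¹ * s by field_simp]
            exact mul_lt_mul_of_pos_left hsn (by positivity)

end stmt4aux

open Metric Real Set in
set_option maxHeartbeats 1000000 in
/-- Let `n ≥ 5`, `Ω ⊂ ℝⁿ` bounded open, `y₀ ∈ Ω`, `H` continuous on `closure Ω`.
If for each `λ > 0` a measurable function `θ_λ` on `Ω` satisfies
`θ_λ(x) = cₙ^{(n-2)/4} λ^{-(n-2)/2} H(x) + R_λ(x)` with `|R_λ(x)| ≤ M λ^{-(n+2)/2}` uniformly,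
then `∫_Ω δ_{y₀,λ} θ_λ = cₙ^{(n-2)/2} λ^{-(n-2)} ∫_Ω H(x)|x-y₀|^{-(n-2)} dx + o(λ^{-(n-2)})`
as `λ → +∞`. -/
theorem stmt_4 (n : ℕ) (hn : 5 ≤ n) (Ω : Set (EuclideanSpace ℝ (Fin n)))
    (hΩo : IsOpen Ω) (hΩb : Bornology.IsBounded Ω)
    (y₀ : EuclideanSpace ℝ (Fin n)) (hy₀ : y₀ ∈ Ω)
    (H : EuclideanSpace ℝ (Fin n) → ℝ) (hH : ContinuousOn H (closure Ω))
    (θ : ℝ → EuclideanSpace ℝ (Fin n) → ℝ)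
    (hθmeas : ∀ lam : ℝ, 0 < lam → AEStronglyMeasurable (θ lam) (volume.restrict Ω))
    (M : ℝ)
    (hθ : ∀ lam : ℝ, 0 < lam → ∀ x ∈ Ω,
      |θ lam x - ((n : ℝ) * ((n : ℝ) - 2)) ^ (((n : ℝ) - 2) / 4) *
          lam ^ (-(((n : ℝ) - 2) / 2)) * H x| ≤ M * lam ^ (-(((n : ℝ) + 2) / 2))) :
    (fun lam : ℝ =>
        (∫ x in Ω, (((n : ℝ) * ((n : ℝ) - 2)) ^ (((n : ℝ) - 2) / 4) *
            (lam / (1 + lam ^ 2 * ‖x - y₀‖ ^ 2)) ^ (((n : ℝ) - 2) / 2)) * θ lam x) -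
          ((n : ℝ) * ((n : ℝ) - 2)) ^ (((n : ℝ) - 2) / 2) * lam ^ (-((n : ℝ) - 2)) *
            ∫ x in Ω, H x / ‖x - y₀‖ ^ ((n : ℝ) - 2))
      =o[atTop] fun lam : ℝ => lam ^ (-((n : ℝ) - 2)) := by
  haveI : NeZero n := ⟨by omega⟩
  have hn5 : (5:ℝ) ≤ (n:ℝ) := by exact_mod_cast hn
  have hn2 : (0:ℝ) < (n:ℝ) - 2 := by linarith
  set c : ℝ := (n:ℝ) * ((n:ℝ) - 2) with hcdef
  have hc : 0 < c := by rw [hcdef]; nlinarith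
  set A : ℝ := c ^ (((n:ℝ) - 2) / 4) with hAdef
  have hA : 0 < A := Real.rpow_pos_of_pos hc _
  set p : ℝ := ((n:ℝ) - 2) / 2 with hpdef
  set q : ℝ := ((n:ℝ) + 2) / 2 with hqdef
  have hp : 0 < p := by rw [hpdef]; linarith
  haveI : IsFiniteMeasure (volume.restrict Ω) :=
    ⟨by rw [Measure.restrict_apply_univ]; exact hΩb.measure_lt_top⟩
  -- the rescaled bubble
  set g : ℝ → EuclideanSpace ℝ (Fin n) → ℝ :=
    fun lam x => (lam ^ 2 / (1 + lam ^ 2 * ‖x - y₀‖ ^ 2)) ^ p with hgdef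
  have hden : ∀ (lam : ℝ) (x : EuclideanSpace ℝ (Fin n)),
      (0:ℝ) < 1 + lam ^ 2 * ‖x - y₀‖ ^ 2 := fun lam x => by positivity
  have hgc : ∀ lam : ℝ, Continuous (g lam) := by
    intro lam
    apply Continuous.rpow_const
    · exact continuous_const.div (by fun_prop) fun x => (hden lam x).ne'
    · exact fun x => Or.inr hp.le
  have hg0 : ∀ lam x, 0 ≤ g lam x := fun lam x => Real.rpow_nonneg (by positivity) _
  -- value of the limiting kernel
  have hKval : ∀ x : EuclideanSpace ℝ (Fin n),
      ((‖x - y₀‖ ^ 2)⁻¹) ^ p = ‖x - y₀‖ ^ (-((n:ℝ) - 2)) := by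
    intro x
    rcases eq_or_lt_of_le (norm_nonneg (x - y₀)) with h0 | h0
    · rw [← h0, zero_pow (two_ne_zero), inv_zero, Real.zero_rpow hp.ne',
        Real.zero_rpow (by linarith : -((n:ℝ) - 2) ≠ 0)]
    · rw [← Real.rpow_natCast ‖x - y₀‖ 2, ← Real.rpow_neg (norm_nonneg _),
        ← Real.rpow_mul (norm_nonneg _)]
      congr 1
      rw [hpdef]
      push_cast
      ring
  -- pointwise domination of g by the limiting kernel
  have hgle : ∀ (lam : ℝ) (x : EuclideanSpace ℝ (Fin n)), x ≠ y₀ →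
      g lam x ≤ ‖x - y₀‖ ^ (-((n:ℝ) - 2)) := by
    intro lam x hx
    rw [← hKval x, hgdef]
    refine Real.rpow_le_rpow (by positivity) ?_ hp.le
    have hr : 0 < ‖x - y₀‖ := by
      rw [norm_pos_iff]
      exact sub_ne_zero.mpr hx
    rw [div_le_iff₀ (hden lam x)]
    have h1 : (‖x - y₀‖ ^ 2)⁻¹ * ‖x - y₀‖ ^ 2 = 1 := inv_mul_cancel₀ (by positivity)
    have h2 : (0:ℝ) ≤ (‖x - y₀‖ ^ 2)⁻¹ := by positivity
    nlinarith [sq_nonneg lam]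
  -- uniform bound for g for fixed lam
  have hgle2 : ∀ (lam : ℝ) (x : EuclideanSpace ℝ (Fin n)), g lam x ≤ (lam ^ 2) ^ p := by
    intro lam x
    refine Real.rpow_le_rpow (by positivity) ?_ hp.le
    refine div_le_self (sq_nonneg lam) ?_
    nlinarith [sq_nonneg lam, sq_nonneg ‖x - y₀‖, mul_nonneg (sq_nonneg lam) (sq_nonneg ‖x - y₀‖)]
  -- bound on H
  have hcomp : IsCompact (closure Ω) := hΩb.isCompact_closure
  obtain ⟨B, hB⟩ := hcomp.exists_bound_of_continuousOn hH
  have hB0 : 0 ≤ B := le_trans (norm_nonneg _) (hB y₀ (subset_closure hy₀))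
  have hM0 : 0 ≤ M := le_trans (abs_nonneg _) (by simpa using hθ 1 one_pos y₀ hy₀)
  -- integrability of the kernel
  obtain ⟨R, hR⟩ := hΩb.subset_ball y₀
  have hKint : IntegrableOn (fun x => ‖x - y₀‖ ^ (-((n:ℝ) - 2))) Ω :=
    (stmt4_aux_int n hn2 (by linarith) y₀ R).mono_set hR
  have hK0 : (0:ℝ) ≤ ∫ x in Ω, ‖x - y₀‖ ^ (-((n:ℝ) - 2)) :=
    integral_nonneg fun x => Real.rpow_nonneg (norm_nonneg _) _
  set K : ℝ := ∫ x in Ω, ‖x - y₀‖ ^ (-((n:ℝ) - 2)) with hKdef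
  set I : ℝ := ∫ x in Ω, H x * ‖x - y₀‖ ^ (-((n:ℝ) - 2)) with hIdef
  have hIeq : (∫ x in Ω, H x / ‖x - y₀‖ ^ ((n:ℝ) - 2)) = I := by
    rw [hIdef]
    refine integral_congr_ae (ae_of_all _ fun x => ?_)
    show H x / ‖x - y₀‖ ^ ((n:ℝ) - 2) = H x * ‖x - y₀‖ ^ (-((n:ℝ) - 2))
    rw [Real.rpow_neg (norm_nonneg _), div_eq_mul_inv]
  -- a.e. nonequality to y₀
  have hy0ae : ∀ᵐ x ∂(volume.restrict Ω), x ≠ y₀ := by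
    refine ae_restrict_of_ae ?_
    rw [ae_iff]
    simp only [ne_eq, not_not]
    exact measure_mono_null (fun a ha => by simpa using ha) (measure_singleton y₀)
  -- measurability of H
  have hHmeas : AEStronglyMeasurable H (volume.restrict Ω) :=
    (hH.mono subset_closure).aestronglyMeasurable hΩo.measurableSet
  -- main dominated convergence
  have hmain : Tendsto (fun lam => ∫ x in Ω, H x * g lam x) atTop (nhds I) := by
    rw [hIdef]
    refine tendsto_integral_filter_of_dominated_convergence
      (fun x => B * ‖x - y₀‖ ^ (-((n:ℝ) - 2)))
      (Eventually.of_forall fun lam => hHmeas.mul (hgc lam).aestronglyMeasurable)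
      (Eventually.of_forall fun lam => ?_) (hKint.const_mul B) ?_
    · filter_upwards [ae_restrict_mem hΩo.measurableSet, hy0ae] with x hx hxne
      rw [norm_mul]
      refine mul_le_mul (hB x (subset_closure hx)) ?_ (norm_nonneg _) hB0
      rw [Real.norm_eq_abs, abs_of_nonneg (hg0 _ x)]
      exact hgle _ x hxne
    · filter_upwards [hy0ae] with x hxne
      refine Tendsto.const_mul (H x) ?_
      have hr : 0 < ‖x - y₀‖ := by
        rw [norm_pos_iff]; exact sub_ne_zero.mpr hxne
      have h0 : Tendsto (fun lam : ℝ => (lam ^ 2)⁻¹) atTop (nhds 0) :=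
        tendsto_inv_atTop_zero.comp (tendsto_pow_atTop two_ne_zero)
      have h1 : Tendsto (fun lam : ℝ => ((lam ^ 2)⁻¹ + ‖x - y₀‖ ^ 2)⁻¹) atTop
          (nhds ((‖x - y₀‖ ^ 2)⁻¹)) := by
        have h2 := (h0.add (tendsto_const_nhds (x := ‖x - y₀‖ ^ 2))).inv₀
          (by positivity : (0:ℝ) + ‖x - y₀‖ ^ 2 ≠ 0)
        simpa using h2
      have hbase : Tendsto (fun lam : ℝ => lam ^ 2 / (1 + lam ^ 2 * ‖x - y₀‖ ^ 2)) atTop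
          (nhds ((‖x - y₀‖ ^ 2)⁻¹)) := by
        refine Tendsto.congr' ?_ h1
        filter_upwards [eventually_gt_atTop (0:ℝ)] with lam hlam
        have h2 : (lam:ℝ) ^ 2 ≠ 0 := by positivity
        field_simp
      have h3 := (Real.continuousAt_rpow_const _ p
        (Or.inl (by positivity : ((‖x - y₀‖ ^ 2)⁻¹ : ℝ) ≠ 0))).tendsto.comp hbase
      rw [hKval x] at h3
      exact h3
  -- integrability lemmas for fixed lam
  have hgHint : ∀ lam : ℝ, Integrable (fun x => H x * g lam x) (volume.restrict Ω) := by
    intro lam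
    refine Integrable.mono' (integrable_const (B * (lam ^ 2) ^ p))
      (hHmeas.mul (hgc lam).aestronglyMeasurable) ?_
    filter_upwards [ae_restrict_mem hΩo.measurableSet] with x hx
    rw [norm_mul]
    refine mul_le_mul (hB x (subset_closure hx)) ?_ (norm_nonneg _) hB0
    rw [Real.norm_eq_abs, abs_of_nonneg (hg0 _ x)]
    exact hgle2 _ x
  have hgθint : ∀ lam : ℝ, 0 < lam →
      Integrable (fun x => g lam x * θ lam x) (volume.restrict Ω) := by
    intro lam hlam
    refine Integrable.mono'
      (integrable_const ((lam ^ 2) ^ p * (M * lam ^ (-q) + A * lam ^ (-p) * B)))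
      ((hgc lam).aestronglyMeasurable.mul (hθmeas lam hlam)) ?_
    filter_upwards [ae_restrict_mem hΩo.measurableSet] with x hx
    rw [norm_mul, Real.norm_eq_abs (g lam x), abs_of_nonneg (hg0 _ x)]
    refine mul_le_mul (hgle2 _ x) ?_ (norm_nonneg _) (by positivity)
    have h1 := hθ lam hlam x hx
    have h2 : |θ lam x| ≤ |θ lam x - A * lam ^ (-p) * H x| + |A * lam ^ (-p) * H x| := by
      have := abs_sub_abs_le_abs_sub (θ lam x) (A * lam ^ (-p) * H x)
      have := abs_add_le (θ lam x - A * lam ^ (-p) * H x) (A * lam ^ (-p) * H x)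
      calc |θ lam x| = |(θ lam x - A * lam ^ (-p) * H x) + A * lam ^ (-p) * H x| := by ring_nf
        _ ≤ _ := abs_add_le _ _
    rw [Real.norm_eq_abs]
    refine le_trans h2 (add_le_add h1 ?_)
    rw [abs_mul, abs_mul, abs_of_nonneg hA.le, abs_of_nonneg (Real.rpow_nonneg hlam.le _)]
    exact mul_le_mul_of_nonneg_left (hB x (subset_closure hx)) (by positivity)
  have hgRint : ∀ lam : ℝ, 0 < lam →
      Integrable (fun x => g lam x * (θ lam x - A * lam ^ (-p) * H x)) (volume.restrict Ω) := by
    intro lam hlam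
    have heq : (fun x => g lam x * (θ lam x - A * lam ^ (-p) * H x))
        = fun x => g lam x * θ lam x - (A * lam ^ (-p)) * (H x * g lam x) := by
      funext x; ring
    rw [heq]
    exact (hgθint lam hlam).sub ((hgHint lam).const_mul _)
  -- the splitting identity
  have hsplit : ∀ lam : ℝ, 0 < lam →
      (∫ x in Ω, (A * (lam / (1 + lam ^ 2 * ‖x - y₀‖ ^ 2)) ^ p) * θ lam x)
        = (A * lam ^ (-p)) * ((A * lam ^ (-p)) * (∫ x in Ω, H x * g lam x)
            + ∫ x in Ω, g lam x * (θ lam x - A * lam ^ (-p) * H x)) := by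
    intro lam hlam
    have hδeq : ∀ x : EuclideanSpace ℝ (Fin n),
        (A * (lam / (1 + lam ^ 2 * ‖x - y₀‖ ^ 2)) ^ p) * θ lam x
          = (A * lam ^ (-p)) * (g lam x * θ lam x) := by
      intro x
      have hst : lam / (1 + lam ^ 2 * ‖x - y₀‖ ^ 2)
          = lam⁻¹ * (lam ^ 2 / (1 + lam ^ 2 * ‖x - y₀‖ ^ 2)) := by
        field_simp
      rw [hst, Real.mul_rpow (inv_nonneg.mpr hlam.le) (by positivity),
        Real.inv_rpow hlam.le, ← Real.rpow_neg hlam.le, hgdef]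
      ring
    calc (∫ x in Ω, (A * (lam / (1 + lam ^ 2 * ‖x - y₀‖ ^ 2)) ^ p) * θ lam x)
        = ∫ x in Ω, (A * lam ^ (-p)) * (g lam x * θ lam x) :=
          integral_congr_ae (ae_of_all _ fun x => hδeq x)
      _ = (A * lam ^ (-p)) * ∫ x in Ω, g lam x * θ lam x := integral_const_mul _ _
      _ = _ := by
          congr 1
          have heq2 : ∀ x : EuclideanSpace ℝ (Fin n), g lam x * θ lam x
              = (A * lam ^ (-p)) * (H x * g lam x)
                + g lam x * (θ lam x - A * lam ^ (-p) * H x) := fun x => by ring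
          rw [integral_congr_ae (ae_of_all _ heq2),
            integral_add ((hgHint lam).const_mul _) (hgRint lam hlam),
            integral_const_mul]
  -- the bound on the remainder integral
  have hJb : ∀ lam : ℝ, 0 < lam →
      |∫ x in Ω, g lam x * (θ lam x - A * lam ^ (-p) * H x)| ≤ M * lam ^ (-q) * K := by
    intro lam hlam
    have h1 : ∀ᵐ x ∂(volume.restrict Ω),
        ‖g lam x * (θ lam x - A * lam ^ (-p) * H x)‖ ≤
          (M * lam ^ (-q)) * ‖x - y₀‖ ^ (-((n:ℝ) - 2)) := by
      filter_upwards [ae_restrict_mem hΩo.measurableSet, hy0ae] with x hx hxne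
      rw [norm_mul, Real.norm_eq_abs (g lam x), abs_of_nonneg (hg0 _ x), Real.norm_eq_abs]
      calc g lam x * |θ lam x - A * lam ^ (-p) * H x|
          ≤ ‖x - y₀‖ ^ (-((n:ℝ) - 2)) * (M * lam ^ (-q)) :=
            mul_le_mul (hgle _ x hxne) (hθ lam hlam x hx) (abs_nonneg _)
              (Real.rpow_nonneg (norm_nonneg _) _)
        _ = (M * lam ^ (-q)) * ‖x - y₀‖ ^ (-((n:ℝ) - 2)) := mul_comm _ _
    have h2 := norm_integral_le_of_norm_le (hKint.const_mul (M * lam ^ (-q))) h1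
    rw [integral_const_mul] at h2
    rw [← Real.norm_eq_abs]
    exact le_trans h2 (le_of_eq (by rw [hKdef]))
  -- the rescaled difference
  set T : ℝ → ℝ := fun lam =>
    A * A * ((∫ x in Ω, H x * g lam x) - I)
      + A * lam ^ p * ∫ x in Ω, g lam x * (θ lam x - A * lam ^ (-p) * H x) with hTdef
  have hT1 : Tendsto (fun lam => A * A * ((∫ x in Ω, H x * g lam x) - I)) atTop (nhds 0) := by
    have := (hmain.sub (tendsto_const_nhds (x := I))).const_mul (A * A)
    simpa using this
  have hT2 : Tendsto (fun lam => A * lam ^ p *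
      ∫ x in Ω, g lam x * (θ lam x - A * lam ^ (-p) * H x)) atTop (nhds 0) := by
    refine squeeze_zero_norm' (a := fun lam => (A * M * K) * lam ^ (-(2:ℝ))) ?_ ?_
    · filter_upwards [eventually_ge_atTop (1:ℝ)] with lam hlam
      have hlam0 : (0:ℝ) < lam := lt_of_lt_of_le one_pos hlam
      have hpq : lam ^ p * lam ^ (-q) = lam ^ (-(2:ℝ)) := by
        rw [← Real.rpow_add hlam0]
        congr 1
        rw [hpdef, hqdef]; ring
      calc ‖A * lam ^ p * ∫ x in Ω, g lam x * (θ lam x - A * lam ^ (-p) * H x)‖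
          = A * lam ^ p * |∫ x in Ω, g lam x * (θ lam x - A * lam ^ (-p) * H x)| := by
            rw [norm_mul, norm_mul, Real.norm_eq_abs, Real.norm_eq_abs, Real.norm_eq_abs,
              abs_of_nonneg hA.le, abs_of_nonneg (Real.rpow_nonneg hlam0.le _)]
        _ ≤ A * lam ^ p * (M * lam ^ (-q) * K) := by
            refine mul_le_mul_of_nonneg_left (hJb lam hlam0) (by positivity)
        _ = (A * M * K) * lam ^ (-(2:ℝ)) := by rw [← hpq]; ring
    · have := (tendsto_rpow_neg_atTop (by norm_num : (0:ℝ) < 2)).const_mul (A * M * K)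
      simpa using this
  have hTlim : Tendsto T atTop (nhds 0) := by
    rw [hTdef]
    simpa using hT1.add hT2
  -- conclusion
  have hTo : T =o[atTop] (fun _ : ℝ => (1:ℝ)) := (isLittleO_one_iff ℝ).mpr hTlim
  have hfin : (fun lam => T lam * lam ^ (-((n:ℝ) - 2))) =o[atTop]
      (fun lam : ℝ => lam ^ (-((n:ℝ) - 2))) := by
    simpa using hTo.mul_isBigO (isBigO_refl (fun lam : ℝ => lam ^ (-((n:ℝ) - 2))) atTop)
  refine hfin.congr' ?_ EventuallyEq.rfl
  filter_upwards [eventually_gt_atTop (0:ℝ)] with lam hlam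
  have e1 : lam ^ (-p) * lam ^ (-p) = lam ^ (-((n:ℝ) - 2)) := by
    rw [← Real.rpow_add hlam]
    congr 1
    rw [hpdef]; ring
  have e2 : lam ^ p * lam ^ (-((n:ℝ) - 2)) = lam ^ (-p) := by
    rw [← Real.rpow_add hlam]
    congr 1
    rw [hpdef]; ring
  have hc2 : c ^ p = A * A := by
    rw [hAdef, ← Real.rpow_add hc]
    congr 1
    rw [hpdef]; ring
  rw [hTdef]
  simp only []
  rw [hsplit lam hlam, hIeq, hc2]
  generalize (∫ x in Ω, H x * g lam x) = GH
  generalize (∫ x in Ω, g lam x * (θ lam x - A * lam ^ (-p) * H x)) = J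
  linear_combination (A * J) * e2 - (A * A * GH) * e1
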